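/- For k = 3 and all x > 0, g_3'(x) > 2(x·g_3(x) − 1), where g_3(x) = 3/(2x + √(x²+3)). -/

import Mathlib

noncomputable def g (k : ℝ) (x : ℝ) : ℝ := k / ((k-1)*x + Real.sqrt (x^2 + k))

theorem g3_deriv_ineq : ∀ x : ℝ, 0 < x → deriv (g 3) x > 2 * (x * g 3 x - 1) := by
  intro x hx
  set s := Real.sqrt (x^2 + 3) with hsdef
  have hpos : (0:ℝ) < x^2 + 3 := by positivity
  have hs2 : s^2 = x^2 + 3 := Real.sq_sqrt hpos.le
  have hs0 : 0 < s := Real.sqrt_pos.mpr hpos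
  have hsx : x < s := by nlinarith [sq_nonneg (s - x)]
  have hd : 0 < (3-1)*x + s := by nlinarith
  have h1 : HasDerivAt (fun y : ℝ => y^2 + 3) (2*x) x := by
    simpa using ((hasDerivAt_pow 2 x).add_const 3)
  have hsq : HasDerivAt (fun y : ℝ => Real.sqrt (y^2 + 3)) (2*x / (2*s)) x :=
    h1.sqrt (by positivity)
  have hden : HasDerivAt (fun y : ℝ => (3-1)*y + Real.sqrt (y^2 + 3))
      ((3-1) + 2*x / (2*s)) x := by
    have := ((hasDerivAt_id' x).const_mul ((3:ℝ)-1)).add hsq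
    simp only [mul_one] at this
    exact this
  have hg : HasDerivAt (g 3)
      ((0 * ((3-1)*x + s) - 3 * ((3-1) + 2*x/(2*s))) / (((3-1)*x + s)^2) ) x := by
    exact (hasDerivAt_const x (3:ℝ)).div hden hd.ne'
  rw [hg.deriv]
  have hgx : g 3 x = 3 / ((3-1)*x + s) := rfl
  rw [hgx]
  rw [gt_iff_lt, show (0 * ((3-1)*x + s) - 3 * ((3-1) + 2*x/(2*s))) / (((3-1)*x + s)^2)
      = -(3 * (2*s + x)) / (s * ((3-1)*x + s)^2) by field_simp; ring]
  rw [show 2 * (x * (3 / ((3-1)*x + s)) - 1)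
      = (2*(3*x - ((3-1)*x + s))) / ((3-1)*x + s) by field_simp,
    div_lt_div_iff₀ hd (by positivity)]
  have key : 2*x*s < 2*x^2 + 3 := by nlinarith [sq_nonneg (2*x^2 + 3 - 2*x*s)]
  nlinarith [mul_pos hx hs0, mul_pos hs0 hd, sq_nonneg (s-x), mul_pos hx (mul_pos hs0 hs0)]
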